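/- For every signed poset P on [n], the Jordan–Hölder set JH(P) is nonempty; that is, there exists a signed permutation ω ∈ S_n^B such that ⟨α, (ω(1),...,ω(n))⟩ ≥ 0 for all α ∈ P. -/

import Mathlib

open Finset Pointwise

noncomputable section
attribute [local instance] Classical.propDecidable

/-- The `i`-th standard unit vector in `ℝ^n`. -/
def ee (n : ℕ) (i : Fin n) : Fin n → ℝ := fun j => if j = i then 1 else 0

/-- Standard inner product on `ℝ^n`. -/
def dot {n : ℕ} (a x : Fin n → ℝ) : ℝ := ∑ i, a i * x i

/-- The type-B root system `B_n`. -/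
def Bn (n : ℕ) : Set (Fin n → ℝ) :=
  {α | (∃ i : Fin n, α = ee n i ∨ α = -ee n i) ∨
       (∃ i j : Fin n, i < j ∧ (α = ee n i + ee n j ∨ α = -ee n i - ee n j ∨
          α = ee n i - ee n j ∨ α = -ee n i + ee n j))}

/-- The set of positive linear combinations of elements of `S`. -/
def PLC {n : ℕ} (S : Set (Fin n → ℝ)) : Set (Fin n → ℝ) :=
  {β | ∃ (m : ℕ) (c : Fin m → ℝ) (v : Fin m → (Fin n → ℝ)),
     (∀ k, 0 < c k) ∧ (∀ k, v k ∈ S) ∧ β = ∑ k, c k • v k}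

/-- A signed poset on `[n]`: a subset of `B_n` with antisymmetry, closed under
positive linear combinations within `B_n`. -/
def IsSignedPoset {n : ℕ} (P : Set (Fin n → ℝ)) : Prop :=
  P ⊆ Bn n ∧ (∀ α ∈ P, -α ∉ P) ∧ (∀ β ∈ Bn n, β ∈ PLC P → β ∈ P)

/-- The signed order cone `K_P`. -/
def orderCone {n : ℕ} (P : Set (Fin n → ℝ)) : Set (Fin n → ℝ) :=
  {x | ∀ α ∈ P, 0 ≤ dot α x}

/-- The signed order polytope `O_P = K_P ∩ [-1,1]^n`. -/
def orderPolytope {n : ℕ} (P : Set (Fin n → ℝ)) : Set (Fin n → ℝ) :=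
  {x | (∀ α ∈ P, 0 ≤ dot α x) ∧ ∀ i, -1 ≤ x i ∧ x i ≤ 1}

/-- A signed permutation on `[n]`, encoded as the underlying permutation `π`
(`π i = |ω(i)|`, zero-indexed) together with the signs (`true` means negative). -/
abbrev SignedPerm (n : ℕ) := Equiv.Perm (Fin n) × (Fin n → Bool)

/-- The sign `ε_i` of a signed permutation. -/
def sgn {n : ℕ} (σ : SignedPerm n) (i : Fin n) : ℝ := if σ.2 i then -1 else 1

/-- The signed permutation `σ` viewed as the point `(σ(1), ..., σ(n)) ∈ ℝ^n`. -/
def spt {n : ℕ} (σ : SignedPerm n) : Fin n → ℝ := fun i => sgn σ i * ((σ.1 i : ℕ) + 1)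

/-- The linear action of a signed permutation on `ℝ^n`, extending
`ω e_i = e_j` if `ω(i) = j` and `ω e_i = -e_j` if `ω(i) = -j`. -/
def sact {n : ℕ} (σ : SignedPerm n) (x : Fin n → ℝ) : Fin n → ℝ :=
  fun j => sgn σ (σ.1.symm j) * x (σ.1.symm j)

/-- The linear action of the inverse signed permutation `σ⁻¹` on `ℝ^n`. -/
def sactInv {n : ℕ} (σ : SignedPerm n) (x : Fin n → ℝ) : Fin n → ℝ :=
  fun i => sgn σ i * x (σ.1 i)

/-- The identity signed permutation. -/
def idSP (n : ℕ) : SignedPerm n := (Equiv.refl (Fin n), fun _ => false)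

/-- The Jordan–Hölder set of a signed poset. -/
def JH {n : ℕ} (P : Set (Fin n → ℝ)) : Set (SignedPerm n) :=
  {σ | ∀ α ∈ P, 0 ≤ dot α (spt σ)}

/-- The value `σ(k)` (as a real number), with the convention `σ(0) = 0`;
here `k` ranges over `0, 1, ..., n`. -/
def svalZ {n : ℕ} (σ : SignedPerm n) : ℕ → ℝ
  | 0 => 0
  | k + 1 => if h : k < n then spt σ ⟨k, h⟩ else 0

/-- The natural descent statistic `natdes(σ) = #{i ∈ {0,...,n-1} : σ(i) > σ(i+1)}`. -/
def natdes {n : ℕ} (σ : SignedPerm n) : ℕ :=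
  ((Finset.range n).filter (fun i => svalZ σ (i + 1) < svalZ σ i)).card


/-! ### Auxiliary lemmas -/

section Aux

variable {n : ℕ}

lemma dot_add' (a b y : Fin n → ℝ) : dot (a + b) y = dot a y + dot b y := by
  simp [dot, add_mul, Finset.sum_add_distrib]

lemma dot_neg' (a y : Fin n → ℝ) : dot (-a) y = - dot a y := by
  simp [dot]

lemma dot_sub' (a b y : Fin n → ℝ) : dot (a - b) y = dot a y - dot b y := by
  simp [dot, sub_mul, Finset.sum_sub_distrib]

lemma dot_ee (i : Fin n) (y : Fin n → ℝ) : dot (ee n i) y = y i := by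
  simp [dot, ee, ite_mul]

lemma eq_sum_ee (α : Fin n → ℝ) : α = ∑ i, α i • ee n i := by
  funext j
  simp [ee, Finset.sum_apply, mul_ite]

lemma neg_mem_Bn {α : Fin n → ℝ} (h : α ∈ Bn n) : -α ∈ Bn n := by
  rcases h with ⟨i, h | h⟩ | ⟨i, j, hij, h | h | h | h⟩
  · exact Or.inl ⟨i, Or.inr (by rw [h])⟩
  · exact Or.inl ⟨i, Or.inl (by rw [h, neg_neg])⟩
  · exact Or.inr ⟨i, j, hij, Or.inr (Or.inl (by rw [h]; abel))⟩
  · exact Or.inr ⟨i, j, hij, Or.inl (by rw [h]; abel)⟩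
  · exact Or.inr ⟨i, j, hij, Or.inr (Or.inr (Or.inr (by rw [h]; abel)))⟩
  · exact Or.inr ⟨i, j, hij, Or.inr (Or.inr (Or.inl (by rw [h]; abel)))⟩

lemma finite_Bn : (Bn n).Finite := by
  have hsub : Bn n ⊆ Set.range (fun i : Fin n => ee n i) ∪
      Set.range (fun i : Fin n => -ee n i) ∪
      Set.range (fun p : Fin n × Fin n => ee n p.1 + ee n p.2) ∪
      Set.range (fun p : Fin n × Fin n => -ee n p.1 - ee n p.2) ∪
      Set.range (fun p : Fin n × Fin n => ee n p.1 - ee n p.2) ∪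
      Set.range (fun p : Fin n × Fin n => -ee n p.1 + ee n p.2) := by
    rintro α (⟨i, h | h⟩ | ⟨i, j, _, h | h | h | h⟩)
    · exact Or.inl (Or.inl (Or.inl (Or.inl (Or.inl ⟨i, h.symm⟩))))
    · exact Or.inl (Or.inl (Or.inl (Or.inl (Or.inr ⟨i, h.symm⟩))))
    · exact Or.inl (Or.inl (Or.inl (Or.inr ⟨(i, j), h.symm⟩)))
    · exact Or.inl (Or.inl (Or.inr ⟨(i, j), h.symm⟩))
    · exact Or.inl (Or.inr ⟨(i, j), h.symm⟩)
    · exact Or.inr ⟨(i, j), h.symm⟩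
  exact Set.Finite.subset
    ((((((Set.finite_range _).union (Set.finite_range _)).union
      (Set.finite_range _)).union (Set.finite_range _)).union
      (Set.finite_range _)).union (Set.finite_range _)) hsub

lemma zero_not_mem_hull {P : Set (Fin n → ℝ)} (hP : IsSignedPoset P) :
    (0 : Fin n → ℝ) ∉ convexHull ℝ P := by
  intro h0
  rw [_root_.convexHull_eq] at h0
  obtain ⟨ι, t, w, z, hw0, hw1, hz, hcm⟩ := h0
  classical
  set t' := t.filter (fun i => 0 < w i) with ht'
  have hfil : ∀ x ∈ t, w x ≠ 0 → 0 < w x := fun x hx hne => (hw0 x hx).lt_of_ne (Ne.symm hne)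
  have hsum' : ∑ i ∈ t', w i = 1 := by
    rw [ht', Finset.sum_filter_of_ne hfil, hw1]
  have hcm' : ∑ i ∈ t, w i • z i = 0 := by
    rw [← Finset.centerMass_eq_of_sum_1 _ _ hw1, hcm]
  have hzero : ∑ i ∈ t', w i • z i = 0 := by
    rw [ht', Finset.sum_filter_of_ne (fun x hx hne => hfil x hx (by
      intro h; apply hne; rw [h, zero_smul])), hcm']
  have hne : t'.Nonempty := by
    rcases Finset.eq_empty_or_nonempty t' with h | h
    · rw [h, Finset.sum_empty] at hsum'; norm_num at hsum'
    · exact h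
  obtain ⟨i0, hi0⟩ := hne
  have hwi0 : 0 < w i0 := (Finset.mem_filter.1 hi0).2
  have hi0t : i0 ∈ t := (Finset.mem_filter.1 hi0).1
  -- -z i0 is a positive combination of the other elements
  have hsplit : w i0 • z i0 + ∑ i ∈ t'.erase i0, w i • z i = 0 := by
    rw [Finset.add_sum_erase t' (fun i => w i • z i) hi0, hzero]
  have hrep : -z i0 = ∑ i ∈ t'.erase i0, (w i / w i0) • z i := by
    have : ∑ i ∈ t'.erase i0, (w i / w i0) • z i
        = (w i0)⁻¹ • ∑ i ∈ t'.erase i0, w i • z i := by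
      rw [Finset.smul_sum]
      refine Finset.sum_congr rfl fun i _ => ?_
      rw [smul_smul, div_eq_inv_mul]
    rw [this]
    have h2 : ∑ i ∈ t'.erase i0, w i • z i = -(w i0 • z i0) := by
      linear_combination (norm := abel) hsplit
    rw [h2, smul_neg, smul_smul, inv_mul_cancel₀ (ne_of_gt hwi0), one_smul]
  -- hence -z i0 ∈ PLC P
  have hPLC : -z i0 ∈ PLC P := by
    refine ⟨(t'.erase i0).card, fun k => w ((t'.erase i0).equivFin.symm k) / w i0,
      fun k => z ((t'.erase i0).equivFin.symm k), fun k => ?_, fun k => ?_, ?_⟩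
    · have hk : ((t'.erase i0).equivFin.symm k : ι) ∈ t'.erase i0 :=
        ((t'.erase i0).equivFin.symm k).2
      have : 0 < w ((t'.erase i0).equivFin.symm k : ι) :=
        (Finset.mem_filter.1 (Finset.mem_of_mem_erase hk)).2
      exact div_pos this hwi0
    · have hk : ((t'.erase i0).equivFin.symm k : ι) ∈ t'.erase i0 :=
        ((t'.erase i0).equivFin.symm k).2
      exact hz _ (Finset.mem_filter.1 (Finset.mem_of_mem_erase hk)).1
    · rw [hrep]
      rw [← Finset.sum_coe_sort (t'.erase i0) (fun i => (w i / w i0) • z i)]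
      exact (Equiv.sum_comp (t'.erase i0).equivFin.symm
        (fun a : (t'.erase i0) => (w (a : ι) / w i0) • z (a : ι))).symm
  have hmem : -z i0 ∈ P := hP.2.2 _ (neg_mem_Bn (hP.1 (hz i0 hi0t))) hPLC
  exact hP.2.1 (z i0) (hz i0 hi0t) hmem

lemma two_lemma (a b A B : ℝ)
    (hA1 : a < 0 → A < 0) (hA2 : 0 < a → 0 < A)
    (hB1 : b < 0 → B < 0) (hB2 : 0 < b → 0 < B)
    (hab : |a| < |b| → |A| < |B|) (hba : |b| < |a| → |B| < |A|)
    (h : 0 < a + b) : 0 < A + B := by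
  rcases lt_trichotomy |a| |b| with hlt | heq | hgt
  · have hb : 0 < b := by
      by_contra hb'
      push_neg at hb'
      have h1 : |b| = -b := abs_of_nonpos hb'
      have h2 : a ≤ |a| := le_abs_self a
      linarith
    have hB : 0 < B := hB2 hb
    have hAB : |A| < |B| := hab hlt
    have h3 : -|A| ≤ A := neg_abs_le A
    have h4 : |B| = B := abs_of_pos hB
    linarith
  · have ha : 0 < a := by
      by_contra ha'
      push_neg at ha'
      have h1 : |a| = -a := abs_of_nonpos ha'
      have h2 : b ≤ |b| := le_abs_self b
      linarith
    have hb : 0 < b := by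
      by_contra hb'
      push_neg at hb'
      have h1 : |b| = -b := abs_of_nonpos hb'
      have h2 : a ≤ |a| := le_abs_self a
      linarith
    have := hA2 ha
    have := hB2 hb
    linarith
  · have ha : 0 < a := by
      by_contra ha'
      push_neg at ha'
      have h1 : |a| = -a := abs_of_nonpos ha'
      have h2 : b ≤ |b| := le_abs_self b
      linarith
    have hA : 0 < A := hA2 ha
    have hBA : |B| < |A| := hba hgt
    have h3 : -|B| ≤ B := neg_abs_le B
    have h4 : |A| = A := abs_of_pos hA
    linarith

end Aux

/-- the Jordan–Hölder set of any signed poset is nonempty. -/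
theorem stmt4 {n : ℕ} (P : Set (Fin n → ℝ)) (hP : IsSignedPoset P) :
    ∃ σ : SignedPerm n, σ ∈ JH P := by
  classical
  -- Step 1: find x with strictly positive pairings
  have hfin : P.Finite := finite_Bn.subset hP.1
  obtain ⟨f, u, hu0, hu⟩ := geometric_hahn_banach_point_closed
    (convex_convexHull ℝ P) (hfin.isCompact_convexHull (𝕜 := ℝ)).isClosed (zero_not_mem_hull hP)
  set x : Fin n → ℝ := fun i => f (ee n i) with hxdef
  have hudot : ∀ α ∈ P, dot α x = f α := by
    intro α hα
    have h1 : ∑ i, α i * f (ee n i) = f (∑ i, α i • ee n i) := by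
      rw [map_sum]
      exact Finset.sum_congr rfl fun i _ => by rw [map_smul, smul_eq_mul]
    calc dot α x = ∑ i, α i * f (ee n i) := rfl
      _ = f (∑ i, α i • ee n i) := h1
      _ = f α := by rw [← eq_sum_ee]
  have hx : ∀ α ∈ P, 0 < dot α x := by
    intro α hα
    rw [hudot α hα]
    have h0 : f 0 = 0 := map_zero f
    have := hu α (subset_convexHull ℝ P hα)
    linarith
  -- Step 2: build the signed permutation
  set π : Equiv.Perm (Fin n) := (Tuple.sort (fun i => |x i|))⁻¹ with hπdef
  set σ : SignedPerm n := (π, fun i => if x i < 0 then true else false) with hσdef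
  have hsgn : ∀ i, sgn σ i = if x i < 0 then -1 else 1 := by
    intro i
    by_cases h : x i < 0 <;> simp [sgn, hσdef, h]
  have hrank : ∀ i j, |x i| < |x j| → π i < π j := by
    intro i j h
    by_contra hle
    push_neg at hle
    have hm := Tuple.monotone_sort (fun i => |x i|) hle
    simp only [Function.comp_apply, hπdef, Equiv.Perm.inv_def, Equiv.apply_symm_apply] at hm
    exact absurd h (not_lt.2 hm)
  have hωpos : ∀ i, 0 < x i → 0 < spt σ i := by
    intro i h
    have : sgn σ i = 1 := by rw [hsgn i, if_neg (not_lt.2 h.le)]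
    rw [spt, this, one_mul]
    positivity
  have hωneg : ∀ i, x i < 0 → spt σ i < 0 := by
    intro i h
    have hs : sgn σ i = -1 := by rw [hsgn i, if_pos h]
    rw [spt, hs]
    have : (0:ℝ) < ((σ.1 i : ℕ) : ℝ) + 1 := by positivity
    linarith
  have hωabs : ∀ i, |spt σ i| = ((π i : ℕ) : ℝ) + 1 := by
    intro i
    have hσ1 : σ.1 = π := rfl
    rw [spt, abs_mul, hσ1]
    have h1 : |sgn σ i| = 1 := by
      rw [hsgn i]; split_ifs <;> norm_num
    rw [h1, one_mul, abs_of_nonneg (by positivity)]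
  have habs : ∀ i j, |x i| < |x j| → |spt σ i| < |spt σ j| := by
    intro i j h
    rw [hωabs i, hωabs j]
    have := hrank i j h
    have hn : (π i : ℕ) < (π j : ℕ) := this
    have : ((π i : ℕ) : ℝ) < ((π j : ℕ) : ℝ) := by exact_mod_cast hn
    linarith
  -- Step 3: verify σ ∈ JH P
  refine ⟨σ, fun α hα => ?_⟩
  have hαx := hx α hα
  rcases hP.1 hα with ⟨i, h | h⟩ | ⟨i, j, hij, h | h | h | h⟩
  · subst h
    rw [dot_ee] at hαx ⊢
    exact (hωpos i hαx).le
  · subst h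
    rw [dot_neg', dot_ee] at hαx ⊢
    have : x i < 0 := by linarith
    have := hωneg i this
    linarith
  · subst h
    rw [dot_add', dot_ee, dot_ee] at hαx ⊢
    exact (two_lemma (x i) (x j) (spt σ i) (spt σ j)
      (hωneg i) (hωpos i) (hωneg j) (hωpos j) (habs i j) (habs j i) hαx).le
  · subst h
    rw [dot_sub', dot_neg', dot_ee, dot_ee] at hαx ⊢
    have key := two_lemma (-x i) (-x j) (-spt σ i) (-spt σ j)
      (fun h => by have := hωpos i (by linarith); linarith)
      (fun h => by have := hωneg i (by linarith); linarith)
      (fun h => by have := hωpos j (by linarith); linarith)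
      (fun h => by have := hωneg j (by linarith); linarith)
      (fun h => by rw [abs_neg, abs_neg] at h ⊢; exact habs i j h)
      (fun h => by rw [abs_neg, abs_neg] at h ⊢; exact habs j i h)
      (by linarith)
    linarith
  · subst h
    rw [dot_sub', dot_ee, dot_ee] at hαx ⊢
    have key := two_lemma (x i) (-x j) (spt σ i) (-spt σ j)
      (hωneg i) (hωpos i)
      (fun h => by have := hωpos j (by linarith); linarith)
      (fun h => by have := hωneg j (by linarith); linarith)
      (fun h => by rw [abs_neg] at h ⊢; exact habs i j h)
      (fun h => by rw [abs_neg] at h ⊢; exact habs j i h)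
      (by linarith)
    linarith
  · subst h
    rw [dot_add', dot_neg', dot_ee, dot_ee] at hαx ⊢
    have key := two_lemma (-x i) (x j) (-spt σ i) (spt σ j)
      (fun h => by have := hωpos i (by linarith); linarith)
      (fun h => by have := hωneg i (by linarith); linarith)
      (hωneg j) (hωpos j)
      (fun h => by rw [abs_neg] at h ⊢; exact habs i j h)
      (fun h => by rw [abs_neg] at h ⊢; exact habs j i h)
      (by linarith)
    linarith
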